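/- The convolution of two Cauchy densities is again a Cauchy density with the location and scale parameters added: for all a, b ∈ ℝ, γ₁, γ₂ > 0 and all x ∈ ℝ, ∫_ℝ (γ₁/(π(γ₁²+(y−a)²))) · (γ₂/(π(γ₂²+(x−y−b)²))) dy = (γ₁+γ₂)/(π((γ₁+γ₂)²+(x−a−b)²)). In particular, the sample mean of n independent Cauchy(θ,1) random variables is again Cauchy(θ,1) distributed. -/

import Mathlib

open MeasureTheory

open Filter Set Topology


private lemma inner_sq (s : ℝ) (y : ℝ) : HasDerivAt (fun y : ℝ => s^2 + y^2) (2*y) y := by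
  simpa using (hasDerivAt_pow 2 y).const_add (s^2)

private lemma inner_sq' (t z : ℝ) (y : ℝ) :
    HasDerivAt (fun y : ℝ => t^2 + (z - y)^2) (-(2*(z-y))) y := by
  have h1 : HasDerivAt (fun y : ℝ => z - y) (-1) y := (hasDerivAt_id y).const_sub z
  have h2 := (h1.pow 2).const_add (t^2)
  simpa using h2

private lemma d_arctan (c r : ℝ) (hr : r ≠ 0) (y : ℝ) :
    HasDerivAt (fun y : ℝ => Real.arctan ((y - c)/r)) (r / (r^2 + (y-c)^2)) y := by
  have h1 : HasDerivAt (fun y : ℝ => (y - c)/r) (1/r) y := by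
    simpa using (((hasDerivAt_id y).sub_const c).div_const r)
  have h2 := (Real.hasDerivAt_arctan ((y - c)/r)).comp y h1
  refine h2.congr_deriv (Eq.symm ?_)
  have : r^2 + (y-c)^2 ≠ 0 := by positivity
  field_simp

private lemma key_deriv (s t z : ℝ) (hs : 0 < s) (ht : 0 < t)
    (hnd : (s-t)^2 + z^2 ≠ 0) (y : ℝ) :
    HasDerivAt (fun y : ℝ =>
      s*t/Real.pi^2 * ((2*z/(((s+t)^2+z^2)*((s-t)^2+z^2)))/2
          * (Real.log (s^2+y^2) - Real.log (t^2+(z-y)^2))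
        + ((t^2+z^2-s^2)/(((s+t)^2+z^2)*((s-t)^2+z^2)))/s * Real.arctan ((y-0)/s)
        + ((s^2+z^2-t^2)/(((s+t)^2+z^2)*((s-t)^2+z^2)))/t * Real.arctan ((y-z)/t)))
      ((s / (Real.pi * (s^2 + y^2))) * (t / (Real.pi * (t^2 + (z - y)^2)))) y := by
  have hP : s^2 + y^2 ≠ 0 := by positivity
  have hQ : t^2 + (z-y)^2 ≠ 0 := by positivity
  have hsum : (s+t)^2 + z^2 ≠ 0 := by positivity
  have d1 := (inner_sq s y).log hP
  have d2 := (inner_sq' t z y).log hQ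
  have d3 := d_arctan 0 s hs.ne' y
  have d4 := d_arctan z t ht.ne' y
  have D := ((((d1.sub d2).const_mul ((2*z/(((s+t)^2+z^2)*((s-t)^2+z^2)))/2)).add
      (d3.const_mul ((t^2+z^2-s^2)/(((s+t)^2+z^2)*((s-t)^2+z^2))/s))).add
      (d4.const_mul ((s^2+z^2-t^2)/(((s+t)^2+z^2)*((s-t)^2+z^2))/t))).const_mul (s*t/Real.pi^2)
  refine D.congr_deriv (Eq.symm ?_)
  have hpi : Real.pi ≠ 0 := Real.pi_ne_zero
  have hy0 : y - 0 = y := by ring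
  rw [hy0]
  field_simp
  ring

private lemma tendsto_ratio_atTop' (s t c : ℝ) (ht : t ≠ 0) :
    Tendsto (fun y : ℝ => (s^2+y^2)/(t^2+(y+c)^2)) atTop (𝓝 1) := by
  have h1 : Tendsto (fun y : ℝ => s^2/y^2) atTop (𝓝 0) :=
    tendsto_const_nhds.div_atTop (tendsto_pow_atTop two_ne_zero)
  have h2 : Tendsto (fun y : ℝ => t^2/y^2) atTop (𝓝 0) :=
    tendsto_const_nhds.div_atTop (tendsto_pow_atTop two_ne_zero)
  have h3 : Tendsto (fun y : ℝ => c/y) atTop (𝓝 0) :=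
    tendsto_const_nhds.div_atTop tendsto_id
  have h4 : Tendsto (fun y : ℝ => (s^2/y^2+1)/(t^2/y^2+(1+c/y)^2)) atTop
      (𝓝 ((0+1)/(0+(1+0)^2))) := by
    apply Tendsto.div (h1.add tendsto_const_nhds)
      (h2.add (((tendsto_const_nhds.add h3)).pow 2))
    norm_num
  have h5 : (fun y : ℝ => (s^2/y^2+1)/(t^2/y^2+(1+c/y)^2)) =ᶠ[atTop]
      (fun y : ℝ => (s^2+y^2)/(t^2+(y+c)^2)) := by
    filter_upwards [eventually_gt_atTop 0] with y hy
    have hden : t^2+(y+c)^2 ≠ 0 := by positivity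
    have hy' : y ≠ 0 := ne_of_gt hy
    field_simp
  have := h4.congr' h5
  norm_num at this
  exact this

private lemma tendsto_ratio_atBot' (s t c : ℝ) (ht : t ≠ 0) :
    Tendsto (fun y : ℝ => (s^2+y^2)/(t^2+(y+c)^2)) atBot (𝓝 1) := by
  have h := (tendsto_ratio_atTop' s t (-c) ht).comp tendsto_neg_atBot_atTop
  apply h.congr
  intro y
  simp only [Function.comp]
  ring_nf

private lemma tendsto_logdiff' (s t z : ℝ) (hs : s ≠ 0) (ht : t ≠ 0) (l : Filter ℝ)
    (hr : Tendsto (fun y : ℝ => (s^2+y^2)/(t^2+(y+(-z))^2)) l (𝓝 1)) :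
    Tendsto (fun y : ℝ => Real.log (s^2+y^2) - Real.log (t^2+(z-y)^2)) l (𝓝 0) := by
  have hc : ContinuousAt Real.log 1 := Real.continuousAt_log one_ne_zero
  have := (hc.tendsto.comp hr)
  rw [Real.log_one] at this
  apply this.congr
  intro y
  have h1 : s^2+y^2 ≠ 0 := by positivity
  have h2 : t^2+(y+(-z))^2 ≠ 0 := by positivity
  simp only [Function.comp]
  rw [Real.log_div h1 h2]
  congr 2
  ring

private lemma arctan_top (c r : ℝ) (hr : 0 < r) :
    Tendsto (fun y : ℝ => Real.arctan ((y - c)/r)) atTop (𝓝 (Real.pi/2)) := by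
  have h1 : Tendsto (fun y : ℝ => (y - c)/r) atTop atTop :=
    (tendsto_atTop_add_const_right atTop (-c) tendsto_id).atTop_div_const hr
  exact (Real.tendsto_arctan_atTop.mono_right nhdsWithin_le_nhds).comp h1

private lemma arctan_bot (c r : ℝ) (hr : 0 < r) :
    Tendsto (fun y : ℝ => Real.arctan ((y - c)/r)) atBot (𝓝 (-(Real.pi/2))) := by
  have h1 : Tendsto (fun y : ℝ => (y - c)/r) atBot atBot :=
    (tendsto_atBot_add_const_right atBot (-c) tendsto_id).atBot_div_const hr
  exact (Real.tendsto_arctan_atBot.mono_right nhdsWithin_le_nhds).comp h1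

private lemma integral_real_of_hasDerivAt_of_nonneg {G g : ℝ → ℝ} {T B : ℝ}
    (hd : ∀ y, HasDerivAt G (g y) y) (hpos : ∀ y, 0 ≤ g y)
    (hT : Tendsto G atTop (𝓝 T)) (hB : Tendsto G atBot (𝓝 B)) :
    ∫ y : ℝ, g y = T - B := by
  have hIoi : ∫ y in Ioi (0:ℝ), g y = T - G 0 :=
    integral_Ioi_of_hasDerivAt_of_nonneg' (fun x _ => hd x) (fun x _ => hpos x) hT
  have hIoiInt : IntegrableOn g (Ioi (0:ℝ)) :=
    integrableOn_Ioi_deriv_of_nonneg' (fun x _ => hd x) (fun x _ => hpos x) hT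
  have hdH : ∀ y : ℝ, HasDerivAt (fun y => -G (-y)) (g (-y)) y := by
    intro y
    have h1 := ((hd (-y)).comp y (hasDerivAt_neg y)).neg
    exact h1.congr_deriv (by simp)
  have hTH : Tendsto (fun y => -G (-y)) atTop (𝓝 (-B)) :=
    (hB.comp tendsto_neg_atTop_atBot).neg
  have hIic' : ∫ y in Ioi (0:ℝ), g (-y) = -B - (fun y => -G (-y)) 0 :=
    integral_Ioi_of_hasDerivAt_of_nonneg' (fun x _ => hdH x) (fun x _ => hpos _) hTH
  have hIicInt' : IntegrableOn (fun y => g (-y)) (Ioi (0:ℝ)) :=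
    integrableOn_Ioi_deriv_of_nonneg' (fun x _ => hdH x) (fun x _ => hpos _) hTH
  have hmap : ∫ y in Ioi (0:ℝ), g (-y) = ∫ y in Iic (0:ℝ), g y := by
    simpa using integral_comp_neg_Ioi (0:ℝ) g
  have hIicInt : IntegrableOn g (Iic (0:ℝ)) := by
    have A : MeasurableEmbedding fun x : ℝ => -x :=
      (Homeomorph.neg ℝ).isClosedEmbedding.measurableEmbedding
    have := (MeasurePreserving.integrableOn_comp_preimage
      (Measure.measurePreserving_neg (volume : Measure ℝ)) A).2 hIicInt'
    rw [integrableOn_Iic_iff_integrableOn_Iio]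
    have h2 : IntegrableOn g (Neg.neg ⁻¹' Ioi (0:ℝ)) := by
      apply this.congr_fun _ (measurableSet_Ioi.preimage A.measurable)
      intro x _; simp
    simpa [neg_preimage, neg_Ioi] using h2
  have hsplit := intervalIntegral.integral_Iic_add_Ioi (b := (0:ℝ)) hIicInt hIoiInt
  have hIic : ∫ y in Iic (0:ℝ), g y = G 0 - B := by
    rw [← hmap, hIic']; simp; ring
  rw [← hsplit, hIic, hIoi]; ring

private lemma key_nondeg (s t z : ℝ) (hs : 0 < s) (ht : 0 < t)
    (hnd : (s-t)^2 + z^2 ≠ 0) :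
    ∫ y : ℝ, (s / (Real.pi * (s^2 + y^2))) * (t / (Real.pi * (t^2 + (z - y)^2)))
      = (s + t) / (Real.pi * ((s + t)^2 + z^2)) := by
  set Δ : ℝ := ((s+t)^2+z^2)*((s-t)^2+z^2) with hΔdef
  have hsum : (s+t)^2 + z^2 ≠ 0 := by positivity
  have hΔ : Δ ≠ 0 := mul_ne_zero hsum hnd
  have hpi : Real.pi ≠ 0 := Real.pi_ne_zero
  set K : ℝ := s*t/Real.pi^2
  set A : ℝ := 2*z/Δ
  set Bc : ℝ := (t^2+z^2-s^2)/Δ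
  set Dc : ℝ := (s^2+z^2-t^2)/Δ
  set G : ℝ → ℝ := fun y =>
    K * (A/2 * (Real.log (s^2+y^2) - Real.log (t^2+(z-y)^2))
      + Bc/s * Real.arctan ((y-0)/s) + Dc/t * Real.arctan ((y-z)/t)) with hGdef
  have hd : ∀ y, HasDerivAt G
      ((s / (Real.pi * (s^2 + y^2))) * (t / (Real.pi * (t^2 + (z - y)^2)))) y :=
    fun y => key_deriv s t z hs ht hnd y
  have hpos : ∀ y : ℝ, 0 ≤ (s / (Real.pi * (s^2 + y^2))) * (t / (Real.pi * (t^2 + (z - y)^2))) := by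
    intro y
    have := Real.pi_pos
    positivity
  have hlogT := tendsto_logdiff' s t z hs.ne' ht.ne' atTop (tendsto_ratio_atTop' s t (-z) ht.ne')
  have hlogB := tendsto_logdiff' s t z hs.ne' ht.ne' atBot (tendsto_ratio_atBot' s t (-z) ht.ne')
  have hGT : Tendsto G atTop
      (𝓝 (K * (A/2 * 0 + Bc/s * (Real.pi/2) + Dc/t * (Real.pi/2)))) :=
    (((hlogT.const_mul (A/2)).add ((arctan_top 0 s hs).const_mul (Bc/s))).add
      ((arctan_top z t ht).const_mul (Dc/t))).const_mul K
  have hGB : Tendsto G atBot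
      (𝓝 (K * (A/2 * 0 + Bc/s * (-(Real.pi/2)) + Dc/t * (-(Real.pi/2))))) :=
    (((hlogB.const_mul (A/2)).add ((arctan_bot 0 s hs).const_mul (Bc/s))).add
      ((arctan_bot z t ht).const_mul (Dc/t))).const_mul K
  rw [integral_real_of_hasDerivAt_of_nonneg hd hpos hGT hGB]
  simp only [hΔdef, K, A, Bc, Dc]
  field_simp
  ring

private lemma key_deg (s : ℝ) (hs : 0 < s) :
    ∫ y : ℝ, (s / (Real.pi * (s^2 + y^2))) * (s / (Real.pi * (s^2 + ((0:ℝ) - y)^2)))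
      = (s + s) / (Real.pi * ((s + s)^2 + (0:ℝ)^2)) := by
  have hpi : Real.pi ≠ 0 := Real.pi_ne_zero
  set K : ℝ := s^2/Real.pi^2 with hK
  set G : ℝ → ℝ := fun y =>
    K * (y/(2*s^2*(s^2+y^2)) + (1/(2*s^3)) * Real.arctan ((y-0)/s)) with hGdef
  have hd : ∀ y, HasDerivAt G
      ((s / (Real.pi * (s^2 + y^2))) * (s / (Real.pi * (s^2 + ((0:ℝ) - y)^2)))) y := by
    intro y
    have hne : 2*s^2*(s^2+y^2) ≠ 0 := by positivity
    have dfrac : HasDerivAt (fun y : ℝ => y/(2*s^2*(s^2+y^2)))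
        ((1*(2*s^2*(s^2+y^2)) - y*(2*s^2*(2*y)))/(2*s^2*(s^2+y^2))^2) y :=
      (hasDerivAt_id y).div ((inner_sq s y).const_mul (2*s^2)) hne
    have d3 := d_arctan 0 s hs.ne' y
    have D := (dfrac.add (d3.const_mul (1/(2*s^3)))).const_mul K
    refine D.congr_deriv (Eq.symm ?_)
    have h1 : s^2 + y^2 ≠ 0 := by positivity
    have h2 : s^2 + ((0:ℝ) - y)^2 ≠ 0 := by positivity
    have h3 : s^2 + (y - 0)^2 ≠ 0 := by positivity
    have hpp : Real.pi^2 * Real.pi⁻¹^2 = 1 := by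
      rw [inv_pow]; exact mul_inv_cancel₀ (by positivity)
    field_simp
    linear_combination
      (-(s ^ 4 * y ^ 4 * 2 + s ^ 6 * y ^ 2 * 4 + s ^ 8 * 2)) * hpp
  have hpos : ∀ y : ℝ, 0 ≤ (s / (Real.pi * (s^2 + y^2))) * (s / (Real.pi * (s^2 + ((0:ℝ) - y)^2))) := by
    intro y
    have := Real.pi_pos
    positivity
  have T1 : Tendsto (fun y : ℝ => y/(2*s^2*(s^2+y^2))) atTop (𝓝 0) := by
    have hdenom : Tendsto (fun y : ℝ => 2*s^2*(s^2/y+y)) atTop atTop := by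
      have : Tendsto (fun y : ℝ => s^2/y+y) atTop atTop :=
        (tendsto_const_nhds.div_atTop tendsto_id).add_atTop tendsto_id
      exact this.const_mul_atTop (by positivity)
    have h := tendsto_inv_atTop_zero.comp hdenom
    apply h.congr'
    filter_upwards [eventually_gt_atTop 0] with y hy
    have hy' : y ≠ 0 := ne_of_gt hy
    have h1 : s^2 + y^2 ≠ 0 := by positivity
    simp only [Function.comp]
    rw [eq_div_iff (by positivity)]
    field_simp
  have T1B : Tendsto (fun y : ℝ => y/(2*s^2*(s^2+y^2))) atBot (𝓝 0) := by
    have h := (T1.comp tendsto_neg_atBot_atTop).neg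
    rw [neg_zero] at h
    apply h.congr
    intro y
    simp only [Function.comp]
    ring_nf
  have hGT : Tendsto G atTop (𝓝 (K * (0 + (1/(2*s^3)) * (Real.pi/2)))) :=
    (T1.add ((arctan_top 0 s hs).const_mul (1/(2*s^3)))).const_mul K
  have hGB : Tendsto G atBot (𝓝 (K * (0 + (1/(2*s^3)) * (-(Real.pi/2))))) :=
    (T1B.add ((arctan_bot 0 s hs).const_mul (1/(2*s^3)))).const_mul K
  rw [integral_real_of_hasDerivAt_of_nonneg hd hpos hGT hGB]
  rw [hK]
  field_simp
  ring

/-- The convolution of two Cauchy densities is again a Cauchy density whose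
location and scale parameters are added: for all `a b : ℝ`, `γ₁ γ₂ > 0` and all `x : ℝ`,
`∫ (γ₁/(π(γ₁²+(y−a)²))) · (γ₂/(π(γ₂²+(x−y−b)²))) dy
  = (γ₁+γ₂)/(π((γ₁+γ₂)²+(x−a−b)²))`.
(In particular, the sample mean of `n` independent `Cauchy(θ,1)` variables is again
`Cauchy(θ,1)` distributed.) -/
theorem cauchy_convolution (a b γ₁ γ₂ : ℝ) (h₁ : 0 < γ₁) (h₂ : 0 < γ₂) (x : ℝ) :
    (∫ y : ℝ, (γ₁ / (Real.pi * (γ₁ ^ 2 + (y - a) ^ 2)))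
        * (γ₂ / (Real.pi * (γ₂ ^ 2 + (x - y - b) ^ 2))))
      = (γ₁ + γ₂) / (Real.pi * ((γ₁ + γ₂) ^ 2 + (x - a - b) ^ 2)) := by
  have hstep : (∫ y : ℝ, (γ₁ / (Real.pi * (γ₁ ^ 2 + (y - a) ^ 2)))
        * (γ₂ / (Real.pi * (γ₂ ^ 2 + (x - y - b) ^ 2))))
      = ∫ y : ℝ, (γ₁ / (Real.pi * (γ₁ ^ 2 + y ^ 2)))
        * (γ₂ / (Real.pi * (γ₂ ^ 2 + ((x - a - b) - y) ^ 2))) := by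
    rw [← integral_sub_right_eq_self (fun u : ℝ => (γ₁ / (Real.pi * (γ₁ ^ 2 + u ^ 2)))
        * (γ₂ / (Real.pi * (γ₂ ^ 2 + ((x - a - b) - u) ^ 2)))) a]
    congr 1
    funext y
    ring_nf
  rw [hstep]
  by_cases hd : (γ₁ - γ₂) ^ 2 + (x - a - b) ^ 2 = 0
  · have h1 : γ₁ = γ₂ := by nlinarith [sq_nonneg (γ₁ - γ₂), sq_nonneg (x - a - b)]
    have h2 : x - a - b = 0 := by nlinarith [sq_nonneg (γ₁ - γ₂), sq_nonneg (x - a - b)]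
    rw [h2, ← h1]
    exact key_deg γ₁ h₁
  · exact key_nondeg γ₁ γ₂ (x - a - b) h₁ h₂ hd
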